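/- arXiv:2009.00265 — 2 statements merged into one kernel-verified Lean document; each statement's English description precedes it below -/
import Mathlib

section
/- For all x, y in the unit disk B² ⊂ ℂ, (1/√2)·b_{B²,2}(x,y) ≤ s_{B²}(x,y) ≤ b_{B²,2}(x,y), where s is the triangular ratio metric and b_{B²,2} is the Barrlund metric with p = 2. -/
/-- Triangular ratio metric of the unit disk. -/
noncomputable def sB (x y : ℂ) : ℝ :=
  ‖x - y‖ /
    sInf ((fun z => ‖x - z‖ + ‖z - y‖) '' {z : ℂ | ‖z‖ = 1})

/-- Barrlund metric with parameter 2 of the unit disk (closed form). -/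
noncomputable def bB2 (x y : ℂ) : ℝ :=
  ‖x - y‖ /
    Real.sqrt (2 + ‖x‖ ^ 2 + ‖y‖ ^ 2 - 2 * ‖x + y‖)

lemma sum_sq_aux (x y z : ℂ) (hz : ‖z‖ = 1) :
    ‖x - z‖ ^ 2 + ‖z - y‖ ^ 2
      = 2 + ‖x‖ ^ 2 + ‖y‖ ^ 2
        - 2 * ((x + y).re * z.re + (x + y).im * z.im) := by
  have hz2 : z.re ^ 2 + z.im ^ 2 = 1 := by
    have h : Complex.normSq z = 1 := by rw [← Complex.sq_norm, hz]; norm_num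
    simpa [Complex.normSq_apply, sq] using h
  simp only [Complex.sq_norm, Complex.normSq_apply, Complex.sub_re, Complex.sub_im,
    Complex.add_re, Complex.add_im]
  nlinarith [hz2]

lemma exists_z0 (w : ℂ) :
    ∃ z : ℂ, ‖z‖ = 1 ∧ w.re * z.re + w.im * z.im = ‖w‖ := by
  rcases eq_or_ne w 0 with h | h
  · exact ⟨1, by simp, by simp [h]⟩
  · have hw : (‖w‖ : ℝ) ≠ 0 := norm_ne_zero_iff.mpr h
    refine ⟨w / (‖w‖ : ℂ), ?_, ?_⟩
    · rw [norm_div, Complex.norm_real, Real.norm_eq_abs, abs_of_nonneg (norm_nonneg w),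
        div_self hw]
    · have h1 : (w / (‖w‖ : ℂ)).re = w.re / ‖w‖ := by
        rw [Complex.div_ofReal_re]
      have h2 : (w / (‖w‖ : ℂ)).im = w.im / ‖w‖ := by
        rw [Complex.div_ofReal_im]
      rw [h1, h2]
      have hsq : w.re * w.re + w.im * w.im = ‖w‖ ^ 2 := by
        rw [Complex.sq_norm, Complex.normSq_apply]
      field_simp
      nlinarith [hsq]

theorem stmt_3 (x y : ℂ) (hx : ‖x‖ < 1) (hy : ‖y‖ < 1) :
    (1 / Real.sqrt 2) * bB2 x y ≤ sB x y ∧ sB x y ≤ bB2 x y := by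
  set d := ‖x - y‖ with hd
  set E := 2 + ‖x‖ ^ 2 + ‖y‖ ^ 2 - 2 * ‖x + y‖ with hE
  have hEpos : 0 < E := by
    have h1 : ‖x + y‖ ≤ ‖x‖ + ‖y‖ := norm_add_le x y
    nlinarith [norm_nonneg x, norm_nonneg y]
  set B := Real.sqrt E with hB
  have hBpos : 0 < B := Real.sqrt_pos.mpr hEpos
  have hB2 : B ^ 2 = E := Real.sq_sqrt hEpos.le
  -- every element of the image is ≥ B
  have hlb : ∀ a ∈ (fun z => ‖x - z‖ + ‖z - y‖) ''
      {z : ℂ | ‖z‖ = 1}, B ≤ a := by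
    rintro a ⟨z, hz, rfl⟩
    have key := sum_sq_aux x y z hz
    have hre : (x + y).re * z.re + (x + y).im * z.im ≤ ‖x + y‖ := by
      have heq : (x + y).re * z.re + (x + y).im * z.im
          = ((x + y) * (starRingEnd ℂ) z).re := by
        simp [Complex.mul_re, Complex.conj_re, Complex.conj_im]
        try ring
      rw [heq]
      calc ((x + y) * (starRingEnd ℂ) z).re
          ≤ ‖(x + y) * (starRingEnd ℂ) z‖ := Complex.re_le_norm _
        _ = ‖x + y‖ := by
            rw [norm_mul, Complex.norm_conj, hz, mul_one]
    have hEle : E ≤ ‖x - z‖ ^ 2 + ‖z - y‖ ^ 2 := by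
      rw [key]; linarith
    show B ≤ ‖x - z‖ + ‖z - y‖
    have h1 : E ≤ (‖x - z‖ + ‖z - y‖) ^ 2 := by
      nlinarith [norm_nonneg (x - z), norm_nonneg (z - y)]
    calc B = Real.sqrt E := rfl
      _ ≤ Real.sqrt ((‖x - z‖ + ‖z - y‖) ^ 2) :=
          Real.sqrt_le_sqrt h1
      _ = ‖x - z‖ + ‖z - y‖ := Real.sqrt_sq
          (by positivity)
  have hbdd : BddBelow ((fun z => ‖x - z‖ + ‖z - y‖) ''
      {z : ℂ | ‖z‖ = 1}) := ⟨B, hlb⟩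
  have hne : ((fun z => ‖x - z‖ + ‖z - y‖) ''
      {z : ℂ | ‖z‖ = 1}).Nonempty := ⟨_, ⟨(1 : ℂ), by simp, rfl⟩⟩
  set S := sInf ((fun z => ‖x - z‖ + ‖z - y‖) ''
      {z : ℂ | ‖z‖ = 1}) with hS
  have hS1 : B ≤ S := le_csInf hne hlb
  have hSpos : 0 < S := lt_of_lt_of_le hBpos hS1
  -- upper bound on S using the minimizer z₀
  obtain ⟨z0, hz0, hre0⟩ := exists_z0 (x + y)
  have key0 := sum_sq_aux x y z0 hz0
  have hEeq : ‖x - z0‖ ^ 2 + ‖z0 - y‖ ^ 2 = E := by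
    rw [key0, hre0]
  have ha0 : ‖x - z0‖ + ‖z0 - y‖ ≤ Real.sqrt 2 * B := by
    have h1 : (‖x - z0‖ + ‖z0 - y‖) ^ 2 ≤ 2 * E := by
      nlinarith [sq_nonneg (‖x - z0‖ - ‖z0 - y‖)]
    calc ‖x - z0‖ + ‖z0 - y‖
        = Real.sqrt ((‖x - z0‖ + ‖z0 - y‖) ^ 2) :=
          (Real.sqrt_sq (by positivity)).symm
      _ ≤ Real.sqrt (2 * E) := Real.sqrt_le_sqrt h1
      _ = Real.sqrt 2 * B := by rw [Real.sqrt_mul (by norm_num : (0:ℝ) ≤ 2)]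
  have hS2 : S ≤ Real.sqrt 2 * B :=
    le_trans (csInf_le hbdd ⟨z0, hz0, rfl⟩) ha0
  have hdnn : 0 ≤ d := norm_nonneg _
  have hsqrt2 : 0 < Real.sqrt 2 := Real.sqrt_pos.mpr (by norm_num)
  constructor
  · -- (1/√2) * (d/B) = d/(√2 * B) ≤ d/S
    show (1 / Real.sqrt 2) * (d / B) ≤ d / S
    have heq : (1 / Real.sqrt 2) * (d / B) = d / (Real.sqrt 2 * B) := by
      field_simp
    rw [heq]
    gcongr
  · show d / S ≤ d / B
    gcongr
end

section
/- For all x, y in the unit disk B² ⊂ ℂ, (1/√2)·b_{B²,2}(x,y) ≤ p_{B²}(x,y) ≤ ((√10 + √2)/4)·b_{B²,2}(x,y). -/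
/-- The point pair function of the unit disk. -/
noncomputable def pB (x y : ℂ) : ℝ :=
  ‖x - y‖ /
    Real.sqrt (‖x - y‖ ^ 2 + 4 * (1 - ‖x‖) * (1 - ‖y‖))

noncomputable def Fk (a b s k : ℝ) : ℝ :=
  -(3+k)*s^2 + 8*s + (2+2*k)*(a^2+b^2) + (4+4*k) - (12+4*k)*(a+b) + (12+4*k)*(a*b)

lemma F1nn (a b k : ℝ) (ha1 : a ≤ 1) (hb0 : 0 ≤ b) (hba : b ≤ a)
    (hk : k^2 = 5) (hk2 : 2 ≤ k) (hk3 : k ≤ 3) : 0 ≤ Fk a b (a-b) k := by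
  have hid : Fk a b (a-b) k = (2*k+4)*(a+b-k+1)^2 + (a-b)*(8-(k+5)*(a-b)) := by
    unfold Fk; nlinarith [sq_nonneg (a+b-k+1)]
  rw [hid]
  have h1 : 0 ≤ a - b := by linarith
  have h2 : 0 ≤ 8 - (k+5)*(a-b) := by nlinarith
  positivity

lemma F2nn (a b k : ℝ) (ha1 : a ≤ 1) (hb1 : b ≤ 1) (ha0 : 0 ≤ a) (hb0 : 0 ≤ b)
    (hk : k^2 = 5) (hk2 : 2 ≤ k) : 0 ≤ Fk a b (a+b) k := by
  unfold Fk
  nlinarith [mul_nonneg (sub_nonneg.2 ha1) (sub_nonneg.2 hb1), sq_nonneg (a+b-2),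
    sq_nonneg (a-b), mul_nonneg (mul_nonneg (sub_nonneg.2 ha1) (sub_nonneg.2 hb1)) (by linarith : (0:ℝ) ≤ k-1)]

lemma Fnn (a b s k : ℝ) (ha0 : 0 ≤ a) (ha1 : a ≤ 1) (hb0 : 0 ≤ b) (hb1 : b ≤ 1)
    (hs1 : s ≤ a + b) (hs2 : a - b ≤ s) (hba : b ≤ a)
    (hk : k^2 = 5) (hk2 : 2 ≤ k) (hk3 : k ≤ 3) : 0 ≤ Fk a b s k := by
  have hF1 := F1nn a b k ha1 hb0 hba hk hk2 hk3
  have hF2 := F2nn a b k ha1 hb1 ha0 hb0 hk hk2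
  rcases eq_or_lt_of_le (show a - b ≤ a + b by linarith) with h | h
  · have hs : s = a - b := le_antisymm (by linarith) hs2
    rw [hs]; exact hF1
  · have key : 0 ≤ ((a+b) - (a-b)) * Fk a b s k := by
      have hid : ((a+b) - (a-b)) * Fk a b s k
          = ((a+b) - s) * Fk a b (a-b) k + (s - (a-b)) * Fk a b (a+b) k
            + (3+k) * ((a+b) - s) * (s - (a-b)) * ((a+b)-(a-b)) := by
        unfold Fk; ring
      rw [hid]
      have t1 : 0 ≤ ((a+b) - s) * Fk a b (a-b) k := mul_nonneg (by linarith) hF1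
      have t2 : 0 ≤ (s - (a-b)) * Fk a b (a+b) k := mul_nonneg (by linarith) hF2
      have t3 : 0 ≤ (3+k) * ((a+b) - s) * (s - (a-b)) * ((a+b)-(a-b)) := by
        apply mul_nonneg
        apply mul_nonneg
        apply mul_nonneg <;> linarith
        all_goals linarith
      linarith
    nlinarith

lemma Fnn' (a b s k : ℝ) (ha0 : 0 ≤ a) (ha1 : a ≤ 1) (hb0 : 0 ≤ b) (hb1 : b ≤ 1)
    (hs1 : s ≤ a + b) (hs2 : a - b ≤ s) (hs3 : b - a ≤ s)
    (hk : k^2 = 5) (hk2 : 2 ≤ k) (hk3 : k ≤ 3) : 0 ≤ Fk a b s k := by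
  rcases le_total b a with h | h
  · exact Fnn a b s k ha0 ha1 hb0 hb1 hs1 hs2 h hk hk2 hk3
  · have := Fnn b a s k hb0 hb1 ha0 ha1 (by linarith) hs3 h hk hk2 hk3
    unfold Fk at *; linarith [this]

set_option maxHeartbeats 1000000 in
lemma main_real (a b d s : ℝ) (ha0 : 0 ≤ a) (ha1 : a < 1) (hb0 : 0 ≤ b) (hb1 : b < 1)
    (hd0 : 0 ≤ d) (hs0 : 0 ≤ s) (hs1 : s ≤ a+b) (hs2 : a-b ≤ s) (hs3 : b-a ≤ s)
    (hpar : d^2 + s^2 = 2*(a^2+b^2)) :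
    (1/Real.sqrt 2) * (d / Real.sqrt (2+a^2+b^2-2*s)) ≤ d / Real.sqrt (d^2+4*(1-a)*(1-b)) ∧
      d / Real.sqrt (d^2+4*(1-a)*(1-b)) ≤
        ((Real.sqrt 10 + Real.sqrt 2)/4) * (d / Real.sqrt (2+a^2+b^2-2*s)) := by
  set k := Real.sqrt 5 with hkdef
  have hk : k^2 = 5 := Real.sq_sqrt (by norm_num)
  have hk2 : 2 ≤ k := by nlinarith [Real.sqrt_nonneg 5]
  have hk3 : k ≤ 3 := by nlinarith [Real.sqrt_nonneg 5]
  set P := d^2 + 4*(1-a)*(1-b) with hPdef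
  set Q := 2 + a^2 + b^2 - 2*s with hQdef
  have hP : 0 < P := by nlinarith [sq_nonneg d]
  have hQ : 0 < Q := by nlinarith [sq_nonneg d, sq_nonneg (2-s)]
  have key1 : P ≤ 2*Q := by
    nlinarith [mul_nonneg (sub_nonneg.2 hs1) (by nlinarith : (0:ℝ) ≤ 4 - s - (a+b)), sq_nonneg (a-b)]
  have key2 : 4*Q ≤ (3+k)*P := by
    have hF := Fnn' a b s k ha0 (le_of_lt ha1) hb0 (le_of_lt hb1) hs1 hs2 hs3 hk hk2 hk3
    have : (3+k)*P - 4*Q = Fk a b s k := by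
      unfold Fk; linear_combination (3+k)*hpar
    linarith
  have hsP : 0 < Real.sqrt P := Real.sqrt_pos.2 hP
  have hsQ : 0 < Real.sqrt Q := Real.sqrt_pos.2 hQ
  constructor
  · have e1 : (1/Real.sqrt 2) * (d / Real.sqrt Q) = d / Real.sqrt (2*Q) := by
      rw [Real.sqrt_mul (by norm_num : (0:ℝ) ≤ 2), div_mul_div_comm, one_mul]
    rw [e1]
    apply div_le_div_of_nonneg_left hd0 hsP
    exact Real.sqrt_le_sqrt key1
  · set c := (Real.sqrt 10 + Real.sqrt 2)/4 with hcdef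
    have h10 : Real.sqrt 10 = Real.sqrt 2 * k := by
      rw [hkdef, ← Real.sqrt_mul (by norm_num : (0:ℝ) ≤ 2)]; norm_num
    have h2sq : Real.sqrt 2 ^ 2 = 2 := Real.sq_sqrt (by norm_num)
    have hc0 : 0 ≤ c := by
      rw [hcdef]; positivity
    have hc2 : c^2 = (3+k)/4 := by
      rw [hcdef, h10]; linear_combination ((k+1)^2/16) * h2sq + (1/8) * hk
    have hQc : Q ≤ c^2 * P := by rw [hc2]; nlinarith [key2]
    have hsqc : Real.sqrt Q ≤ c * Real.sqrt P := by
      calc Real.sqrt Q ≤ Real.sqrt (c^2 * P) := Real.sqrt_le_sqrt hQc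
        _ = c * Real.sqrt P := by
            rw [Real.sqrt_mul (by positivity), Real.sqrt_sq hc0]
    rw [mul_div_assoc' c d, div_le_div_iff₀ hsP hsQ]
    calc d * Real.sqrt Q ≤ d * (c * Real.sqrt P) := mul_le_mul_of_nonneg_left hsqc hd0
      _ = c * d * Real.sqrt P := by ring

theorem stmt_5 (x y : ℂ) (hx : ‖x‖ < 1) (hy : ‖y‖ < 1) :
    (1 / Real.sqrt 2) * bB2 x y ≤ pB x y ∧
      pB x y ≤ ((Real.sqrt 10 + Real.sqrt 2) / 4) * bB2 x y := by
  have ha0 : 0 ≤ ‖x‖ := norm_nonneg x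
  have hb0 : 0 ≤ ‖y‖ := norm_nonneg y
  have hd0 : 0 ≤ ‖x - y‖ := norm_nonneg _
  have hs0 : 0 ≤ ‖x + y‖ := norm_nonneg _
  have hs1 : ‖x + y‖ ≤ ‖x‖ + ‖y‖ := norm_add_le x y
  have hs2 : ‖x‖ - ‖y‖ ≤ ‖x + y‖ := by
    have := norm_add_le (x + y) (-y)
    simp only [add_neg_cancel_right, norm_neg] at this
    linarith
  have hs3 : ‖y‖ - ‖x‖ ≤ ‖x + y‖ := by
    have := norm_add_le (x + y) (-x)
    have e : x + y + -x = y := by ring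
    rw [e, norm_neg] at this
    linarith
  have hpar : ‖x - y‖ ^ 2 + ‖x + y‖ ^ 2
      = 2 * (‖x‖ ^ 2 + ‖y‖ ^ 2) := by
    have := parallelogram_law_with_norm ℝ x y
    nlinarith [this]
  have := main_real (‖x‖) (‖y‖) (‖x - y‖) (‖x + y‖)
    ha0 hx hb0 hy hd0 hs0 hs1 hs2 hs3 hpar
  unfold pB bB2
  constructor
  · have h := this.1
    convert h using 3 <;> ring
  · have h := this.2
    convert h using 3 <;> ring
end
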